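/- Let A, B be Hermitian matrices of sizes n and m respectively with |A|_∞ ≤ 1 and |B|_∞ ≤ 1, and fix i with 1 ≤ i ≤ min(m,n). If μᵢ(A) ≥ 0 and μᵢ(B) ≥ 0, then |μᵢ(A)/n − μᵢ(B)/m| ≤ 6·δ_□(A,B)^{1/2}. -/

import Mathlib

open Matrix Finset

/-- The cut-norm of a complex `M × N` matrix. -/
noncomputable def cutNorm {M N : ℕ} (A : Matrix (Fin M) (Fin N) ℂ) : ℝ :=
  Finset.univ.sup' Finset.univ_nonempty
    (fun p : Finset (Fin M) × Finset (Fin N) =>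
      ‖∑ i ∈ p.1, ∑ j ∈ p.2, A i j‖ / (M * N))

/-- `|A|_∞ = max_{i,j} |a_{ij}|`. -/
noncomputable def supAbs {M N : ℕ} (A : Matrix (Fin M) (Fin N) ℂ) : ℝ :=
  ⨆ i, ⨆ j, ‖A i j‖

/-- `f` rearranged in decreasing order. -/
noncomputable def sortDesc {N : ℕ} (f : Fin N → ℝ) : Fin N → ℝ :=
  fun i => f (Tuple.sort f i.rev)

/-- `δ̂_□(X,Y) = min over permutation matrices `P` of `‖X − P Y P⁻¹‖_□`:
conjugating by a permutation matrix is relabelling by a permutation. -/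
noncomputable def hatDelta {N : ℕ} (X Y : Matrix (Fin N) (Fin N) ℂ) : ℝ :=
  ⨅ σ : Equiv.Perm (Fin N), cutNorm (X - Y.submatrix σ σ)

/-- `A^{(t)} = A ⊗ J_t`, realised as a matrix indexed by `Fin (n * t)`. -/
def blowup {n : ℕ} (A : Matrix (Fin n) (Fin n) ℂ) (t : ℕ) :
    Matrix (Fin (n * t)) (Fin (n * t)) ℂ :=
  Matrix.of fun i j => A (finProdFinEquiv.symm i).1 (finProdFinEquiv.symm j).1

/-- The cut-distance of Hermitian matrices `A` (size `n`) and `B` (size `m`):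
`δ_□(A,B) = inf_{k ≥ 1} δ̂_□(A^{(km)}, B^{(kn)})`. -/
noncomputable def cutDist {n m : ℕ} (A : Matrix (Fin n) (Fin n) ℂ)
    (B : Matrix (Fin m) (Fin m) ℂ) : ℝ :=
  ⨅ k : ℕ, hatDelta (blowup A ((k + 1) * m))
    ((blowup B ((k + 1) * n)).submatrix (finCongr (by ring)) (finCongr (by ring)))


namespace EigCut

variable {N : ℕ}

noncomputable def nsq (v : Fin N → ℂ) : ℝ := ∑ k, Complex.normSq (v k)
noncomputable def qf (M : Matrix (Fin N) (Fin N) ℂ) (v : Fin N → ℂ) : ℝ :=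
  (star v ⬝ᵥ (M *ᵥ v)).re

lemma nsq_nonneg (v : Fin N → ℂ) : 0 ≤ nsq v :=
  Finset.sum_nonneg fun _ _ => Complex.normSq_nonneg _

lemma nsq_pos {v : Fin N → ℂ} (hv : v ≠ 0) : 0 < nsq v := by
  obtain ⟨k, hk⟩ : ∃ k, v k ≠ 0 := by
    by_contra h; push_neg at h; exact hv (funext h)
  refine Finset.sum_pos' (fun _ _ => Complex.normSq_nonneg _) ⟨k, Finset.mem_univ k, ?_⟩
  exact Complex.normSq_pos.2 hk

lemma qf_add (M₁ M₂ : Matrix (Fin N) (Fin N) ℂ) (v : Fin N → ℂ) :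
    qf (M₁ + M₂) v = qf M₁ v + qf M₂ v := by
  simp [qf, Matrix.add_mulVec, dotProduct_add]

lemma qf_sub_add (X Y : Matrix (Fin N) (Fin N) ℂ) (v : Fin N → ℂ) :
    qf X v = qf Y v + qf (X - Y) v := by
  have := qf_add Y (X - Y) v
  rwa [add_sub_cancel] at this


/-- permutation whose composition with `f` gives the decreasing rearrangement -/
noncomputable def sperm (f : Fin N → ℝ) : Equiv.Perm (Fin N) :=
  (Fin.revPerm).trans (Tuple.sort f)

lemma sortDesc_eq (f : Fin N → ℝ) (j : Fin N) : sortDesc f j = f (sperm f j) := by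
  simp [sortDesc, sperm]

lemma sortDesc_antitone (f : Fin N → ℝ) : Antitone (sortDesc f) := by
  intro a b hab
  have h1 : b.rev ≤ a.rev := Fin.rev_le_rev.2 hab
  exact Tuple.monotone_sort f h1

variable {M : Matrix (Fin N) (Fin N) ℂ} (hM : M.IsHermitian)

/-- sorted (decreasing) eigenvalues -/
noncomputable def ev (hM : M.IsHermitian) : Fin N → ℝ := sortDesc hM.eigenvalues

/-- eigenvectors ordered compatibly with `ev` -/
noncomputable def evec (hM : M.IsHermitian) (j : Fin N) : Fin N → ℂ :=
  ⇑(hM.eigenvectorBasis (sperm hM.eigenvalues j))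

lemma mulVec_evec (j : Fin N) : M *ᵥ evec hM j = (ev hM j : ℂ) • evec hM j := by
  have := hM.mulVec_eigenvectorBasis (sperm hM.eigenvalues j)
  rw [evec, this, ev, sortDesc_eq]
  ext k
  simp [Complex.real_smul]

/-- coefficient functional -/
noncomputable def coef (hM : M.IsHermitian) (j : Fin N) (v : Fin N → ℂ) : ℂ :=
  star (evec hM j) ⬝ᵥ v

lemma coef_evec (j l : Fin N) : coef hM j (evec hM l) = if j = l then 1 else 0 := by
  classical
  have hmem := (hM.eigenvectorUnitary).2
  have h1 : star (hM.eigenvectorUnitary : Matrix (Fin N) (Fin N) ℂ) *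
      (hM.eigenvectorUnitary : Matrix (Fin N) (Fin N) ℂ) = 1 := hmem.1
  have := congrArg (fun Z : Matrix (Fin N) (Fin N) ℂ =>
    Z (sperm hM.eigenvalues j) (sperm hM.eigenvalues l)) h1
  simp only [Matrix.mul_apply, Matrix.one_apply, Matrix.star_apply] at this
  have hinj : sperm hM.eigenvalues j = sperm hM.eigenvalues l ↔ j = l :=
    (Equiv.apply_eq_iff_eq _)
  rw [coef, dotProduct]
  simp only [Pi.star_apply, evec]
  simp only [← Matrix.IsHermitian.eigenvectorUnitary_apply]
  rw [this, if_congr hinj rfl rfl]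

lemma sum_coef_smul (v : Fin N → ℂ) : ∑ j, coef hM j v • evec hM j = v := by
  classical
  have hmem := (hM.eigenvectorUnitary).2
  have h2 : (hM.eigenvectorUnitary : Matrix (Fin N) (Fin N) ℂ) *
      star (hM.eigenvectorUnitary : Matrix (Fin N) (Fin N) ℂ) = 1 := hmem.2
  funext k
  have hcomp : ∀ k l : Fin N, (∑ j, evec hM j k * star (evec hM j l)) =
      if k = l then 1 else 0 := by
    intro k l
    have := congrArg (fun Z : Matrix (Fin N) (Fin N) ℂ => Z k l) h2
    simp only [Matrix.mul_apply, Matrix.one_apply, Matrix.star_apply] at this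
    rw [← this]
    rw [← Equiv.sum_comp (sperm hM.eigenvalues)
      (fun x => (hM.eigenvectorUnitary : Matrix (Fin N) (Fin N) ℂ) k x *
        star ((hM.eigenvectorUnitary : Matrix (Fin N) (Fin N) ℂ) l x))]
    refine Finset.sum_congr rfl fun j _ => ?_
    simp [evec, Matrix.IsHermitian.eigenvectorUnitary_apply]
  have : (∑ j, coef hM j v • evec hM j) k
      = ∑ l, v l * ∑ j, evec hM j k * star (evec hM j l) := by
    simp only [Finset.sum_apply, Pi.smul_apply, coef, dotProduct, smul_eq_mul,
      Finset.sum_mul, Finset.mul_sum]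
    rw [Finset.sum_comm]
    refine Finset.sum_congr rfl fun l _ => Finset.sum_congr rfl fun j _ => ?_
    simp only [Pi.star_apply]
    ring
  rw [this]
  simp only [hcomp]
  simp [Finset.sum_ite_eq, eq_comm]

lemma dot_sum_smul (v : Fin N → ℂ) (d : Fin N → ℂ) :
    star v ⬝ᵥ (∑ j, d j • evec hM j) = ∑ j, d j * starRingEnd ℂ (coef hM j v) := by
  classical
  simp only [dotProduct, Finset.sum_apply, Pi.smul_apply, smul_eq_mul, Pi.star_apply,
    coef, map_sum]
  simp only [Finset.mul_sum]
  rw [Finset.sum_comm]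
  refine Finset.sum_congr rfl fun j _ => ?_
  refine Finset.sum_congr rfl fun k _ => ?_
  simp only [Pi.star_apply, _root_.map_mul, Complex.star_def, Complex.conj_conj]
  ring

lemma parseval (v : Fin N → ℂ) : nsq v = ∑ j, Complex.normSq (coef hM j v) := by
  classical
  have h1 : star v ⬝ᵥ v = ∑ j, coef hM j v * starRingEnd ℂ (coef hM j v) := by
    have h1' := dot_sum_smul hM v (fun j => coef hM j v)
    rw [sum_coef_smul hM v] at h1'
    exact h1'
  have h2 : nsq v = (star v ⬝ᵥ v).re := by
    rw [nsq, dotProduct, Complex.re_sum]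
    refine Finset.sum_congr rfl fun k _ => ?_
    simp only [Pi.star_apply, Complex.star_def]
    rw [mul_comm, Complex.mul_conj]
    simp
  rw [h2, h1, Complex.re_sum]
  refine Finset.sum_congr rfl fun j _ => ?_
  rw [Complex.mul_conj]
  simp

lemma mulVec_expand (v : Fin N → ℂ) :
    M *ᵥ v = ∑ j, ((ev hM j : ℂ) * coef hM j v) • evec hM j := by
  classical
  conv_lhs => rw [← sum_coef_smul hM v]
  funext k
  simp only [Matrix.mulVec, dotProduct, Finset.sum_apply, Pi.smul_apply, smul_eq_mul,
    Finset.mul_sum]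
  rw [Finset.sum_comm]
  refine Finset.sum_congr rfl fun j _ => ?_
  have : ∑ l, M k l * (coef hM j v * evec hM j l) = coef hM j v * (M *ᵥ evec hM j) k := by
    simp only [Matrix.mulVec, dotProduct, Finset.mul_sum]
    refine Finset.sum_congr rfl fun l _ => by ring
  rw [this, mulVec_evec hM j]
  simp only [Pi.smul_apply, smul_eq_mul]
  ring

lemma qf_expand (v : Fin N → ℂ) :
    qf M v = ∑ j, ev hM j * Complex.normSq (coef hM j v) := by
  classical
  rw [qf, mulVec_expand hM v, dot_sum_smul hM v, Complex.re_sum]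
  refine Finset.sum_congr rfl fun j _ => ?_
  rw [mul_assoc, Complex.mul_conj]
  simp

/-- coefficient functional as a linear map -/
noncomputable def coefL (hM : M.IsHermitian) (j : Fin N) : (Fin N → ℂ) →ₗ[ℂ] ℂ where
  toFun := coef hM j
  map_add' x y := by simp [coef, dotProduct_add]
  map_smul' a x := by
    simp [coef, dotProduct, Finset.mul_sum, mul_left_comm]

/-- vectors whose eigencoefficients vanish on `s` -/
noncomputable def coSpace (hM : M.IsHermitian) (s : Finset (Fin N)) :
    Submodule ℂ (Fin N → ℂ) :=
  LinearMap.ker (LinearMap.pi (fun j : {j // j ∈ s} => coefL hM j))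

lemma mem_coSpace {s : Finset (Fin N)} {v : Fin N → ℂ} :
    v ∈ coSpace hM s ↔ ∀ j ∈ s, coef hM j v = 0 := by
  simp only [coSpace, LinearMap.mem_ker, LinearMap.pi_apply, funext_iff]
  constructor
  · intro h j hj; exact h ⟨j, hj⟩
  · intro h j; exact h j.1 j.2

lemma finrank_coSpace_ge (s : Finset (Fin N)) :
    N - s.card ≤ Module.finrank ℂ (coSpace hM s) := by
  classical
  have h1 : Module.finrank ℂ (LinearMap.range
        (LinearMap.pi (fun j : {j // j ∈ s} => coefL hM j)))
      + Module.finrank ℂ (coSpace hM s) = Module.finrank ℂ (Fin N → ℂ) :=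
    LinearMap.finrank_range_add_finrank_ker _
  have h2 : Module.finrank ℂ (LinearMap.range
      (LinearMap.pi (fun j : {j // j ∈ s} => coefL hM j))) ≤ s.card := by
    refine le_trans (Submodule.finrank_le _) ?_
    rw [Module.finrank_fintype_fun_eq_card]
    simp
  have h3 : Module.finrank ℂ (Fin N → ℂ) = N := by
    rw [Module.finrank_fintype_fun_eq_card]; simp
  omega

lemma qf_ge_on_top {p : Fin N} {v : Fin N → ℂ} (hv : v ∈ coSpace hM (Finset.Ioi p)) :
    ev hM p * nsq v ≤ qf M v := by
  rw [qf_expand hM v, parseval hM v, Finset.mul_sum]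
  refine Finset.sum_le_sum fun j _ => ?_
  rcases le_or_gt j p with h | h
  · exact mul_le_mul_of_nonneg_right (sortDesc_antitone _ h) (Complex.normSq_nonneg _)
  · rw [(mem_coSpace hM).1 hv j (Finset.mem_Ioi.2 h)]
    simp

lemma qf_le_on_bot {p : Fin N} {v : Fin N → ℂ} (hv : v ∈ coSpace hM (Finset.Iio p)) :
    qf M v ≤ ev hM p * nsq v := by
  rw [qf_expand hM v, parseval hM v, Finset.mul_sum]
  refine Finset.sum_le_sum fun j _ => ?_
  rcases lt_or_ge j p with h | h
  · rw [(mem_coSpace hM).1 hv j (Finset.mem_Iio.2 h)]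
    simp
  · exact mul_le_mul_of_nonneg_right (sortDesc_antitone _ h) (Complex.normSq_nonneg _)

lemma exists_ne_zero_mem_inf {V W : Submodule ℂ (Fin N → ℂ)}
    (h : N < Module.finrank ℂ V + Module.finrank ℂ W) :
    ∃ v : Fin N → ℂ, v ≠ 0 ∧ v ∈ V ∧ v ∈ W := by
  have hsum := Submodule.finrank_sup_add_finrank_inf_eq V W
  have hsup : Module.finrank ℂ ↥(V ⊔ W) ≤ N := by
    refine le_trans (Submodule.finrank_le _) ?_
    rw [Module.finrank_fintype_fun_eq_card]; simp
  have hpos : 0 < Module.finrank ℂ ↥(V ⊓ W) := by omega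
  have hne : V ⊓ W ≠ ⊥ := by
    intro hb
    rw [hb, finrank_bot] at hpos
    exact lt_irrefl _ hpos
  obtain ⟨v, hv, hv0⟩ := Submodule.exists_mem_ne_zero_of_ne_bot hne
  exact ⟨v, hv0, hv.1, hv.2⟩

/-- Courant–Fischer, lower-bound direction. -/
lemma le_ev_of_subspace {p : Fin N} {c : ℝ} (V : Submodule ℂ (Fin N → ℂ))
    (hrank : (p : ℕ) + 1 ≤ Module.finrank ℂ V)
    (hform : ∀ v ∈ V, c * nsq v ≤ qf M v) : c ≤ ev hM p := by
  have hbot := finrank_coSpace_ge hM (Finset.Iio p)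
  rw [Fin.card_Iio] at hbot
  obtain ⟨v, hv0, hvV, hvW⟩ := exists_ne_zero_mem_inf
    (V := V) (W := coSpace hM (Finset.Iio p)) (by have := p.2; omega)
  have h1 := hform v hvV
  have h2 := qf_le_on_bot hM hvW
  have h3 := nsq_pos hv0
  nlinarith
/-- Courant–Fischer, upper-bound direction. -/
lemma ev_le_of_subspace {p : Fin N} {c : ℝ} (W : Submodule ℂ (Fin N → ℂ))
    (hrank : N - (p : ℕ) ≤ Module.finrank ℂ W)
    (hform : ∀ v ∈ W, qf M v ≤ c * nsq v) : ev hM p ≤ c := by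
  have htop := finrank_coSpace_ge hM (Finset.Ioi p)
  rw [Fin.card_Ioi] at htop
  obtain ⟨v, hv0, hvV, hvW⟩ := exists_ne_zero_mem_inf
    (V := coSpace hM (Finset.Ioi p)) (W := W) (by have := p.2; omega)
  have h1 := hform v hvW
  have h2 := qf_ge_on_top hM hvV
  have h3 := nsq_pos hv0
  nlinarith

lemma abs_qf_le {lam : ℝ} (hlam : ∀ j, |ev hM j| ≤ lam) (v : Fin N → ℂ) :
    |qf M v| ≤ lam * nsq v := by
  rw [qf_expand hM v, parseval hM v, Finset.mul_sum]
  refine le_trans (Finset.abs_sum_le_sum_abs _ _) (Finset.sum_le_sum fun j _ => ?_)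
  rw [abs_mul, abs_of_nonneg (Complex.normSq_nonneg _)]
  exact mul_le_mul_of_nonneg_right (hlam j) (Complex.normSq_nonneg _)



lemma nonneg_bil_le (R : Matrix (Fin N) (Fin N) ℝ) (Rb s t : ℝ)
    (hs : 0 ≤ s) (ht : 0 ≤ t)
    (hR : ∀ S T : Finset (Fin N), |∑ k ∈ S, ∑ l ∈ T, R k l| ≤ Rb)
    (a c : Fin N → ℝ) (ha : ∀ k, 0 ≤ a k ∧ a k ≤ s) (hc : ∀ l, 0 ≤ c l ∧ c l ≤ t) :
    ∑ k, ∑ l, a k * R k l * c l ≤ Rb * s * t := by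
  classical
  set z : Fin N → ℝ := fun k => ∑ l, R k l * c l with hz
  have step1 : ∑ k, ∑ l, a k * R k l * c l ≤ s * ∑ k ∈ univ.filter (fun k => 0 ≤ z k), z k := by
    rw [Finset.mul_sum, Finset.sum_filter]
    refine Finset.sum_le_sum fun k _ => ?_
    have hk : ∑ l, a k * R k l * c l = a k * z k := by
      rw [hz, Finset.mul_sum]
      exact Finset.sum_congr rfl fun l _ => by ring
    rw [hk]
    by_cases h : 0 ≤ z k
    · rw [if_pos h]
      exact mul_le_mul_of_nonneg_right (ha k).2 h
    · rw [if_neg h]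
      exact mul_nonpos_of_nonneg_of_nonpos (ha k).1 (le_of_lt (not_le.1 h))
  set P := univ.filter (fun k => 0 ≤ z k) with hP
  set w : Fin N → ℝ := fun l => ∑ k ∈ P, R k l with hw
  have step2 : ∑ k ∈ P, z k = ∑ l, c l * w l := by
    calc ∑ k ∈ P, z k = ∑ k ∈ P, ∑ l, R k l * c l := rfl
      _ = ∑ l, ∑ k ∈ P, R k l * c l := Finset.sum_comm
      _ = ∑ l, c l * w l := Finset.sum_congr rfl fun l _ => by
          rw [hw, ← Finset.sum_mul, mul_comm]
  set Q := univ.filter (fun l => 0 ≤ w l) with hQ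
  have step3 : ∑ l, c l * w l ≤ t * ∑ l ∈ Q, w l := by
    rw [Finset.mul_sum, Finset.sum_filter]
    refine Finset.sum_le_sum fun l _ => ?_
    by_cases h : 0 ≤ w l
    · rw [if_pos h]
      exact mul_le_mul_of_nonneg_right (hc l).2 h
    · rw [if_neg h]
      exact mul_nonpos_of_nonneg_of_nonpos (hc l).1 (le_of_lt (not_le.1 h))
  have step4 : ∑ l ∈ Q, w l ≤ Rb := by
    have : ∑ l ∈ Q, w l = ∑ k ∈ P, ∑ l ∈ Q, R k l := by
      rw [hw, Finset.sum_comm]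
    rw [this]
    exact le_trans (le_abs_self _) (hR P Q)
  have hPz : 0 ≤ ∑ k ∈ P, z k := Finset.sum_nonneg fun k hk => (Finset.mem_filter.1 hk).2
  calc ∑ k, ∑ l, a k * R k l * c l ≤ s * ∑ k ∈ P, z k := step1
    _ = s * ∑ l, c l * w l := by rw [step2]
    _ ≤ s * (t * ∑ l ∈ Q, w l) := by
        refine mul_le_mul_of_nonneg_left ?_ hs
        rw [← step2] at step3 ⊢
        exact step3
    _ ≤ s * (t * Rb) := by
        refine mul_le_mul_of_nonneg_left (mul_le_mul_of_nonneg_left step4 ht) hs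
    _ = Rb * s * t := by ring

lemma nonneg_bil (R : Matrix (Fin N) (Fin N) ℝ) (Rb s t : ℝ)
    (hs : 0 ≤ s) (ht : 0 ≤ t)
    (hR : ∀ S T : Finset (Fin N), |∑ k ∈ S, ∑ l ∈ T, R k l| ≤ Rb)
    (a c : Fin N → ℝ) (ha : ∀ k, 0 ≤ a k ∧ a k ≤ s) (hc : ∀ l, 0 ≤ c l ∧ c l ≤ t) :
    |∑ k, ∑ l, a k * R k l * c l| ≤ Rb * s * t := by
  rw [abs_le]
  constructor
  · have := nonneg_bil_le (-R) Rb s t hs ht (fun S T => by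
      simpa [Finset.sum_neg_distrib, abs_neg] using hR S T) a c ha hc
    have heq : ∑ k, ∑ l, a k * (-R) k l * c l = -∑ k, ∑ l, a k * R k l * c l := by
      simp [Matrix.neg_apply, mul_neg, neg_mul, Finset.sum_neg_distrib]
    rw [heq] at this
    linarith
  · exact nonneg_bil_le R Rb s t hs ht hR a c ha hc

lemma real_bil (R : Matrix (Fin N) (Fin N) ℝ) (Rb s t : ℝ)
    (hs : 0 ≤ s) (ht : 0 ≤ t)
    (hR : ∀ S T : Finset (Fin N), |∑ k ∈ S, ∑ l ∈ T, R k l| ≤ Rb)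
    (a c : Fin N → ℝ) (ha : ∀ k, |a k| ≤ s) (hc : ∀ l, |c l| ≤ t) :
    |∑ k, ∑ l, a k * R k l * c l| ≤ 4 * Rb * s * t := by
  classical
  set ap : Fin N → ℝ := fun k => max (a k) 0 with hap
  set am : Fin N → ℝ := fun k => max (-a k) 0 with ham
  set cp : Fin N → ℝ := fun l => max (c l) 0 with hcp
  set cm : Fin N → ℝ := fun l => max (-c l) 0 with hcm
  have hsplit : ∑ k, ∑ l, a k * R k l * c l =
      ((∑ k, ∑ l, ap k * R k l * cp l) - (∑ k, ∑ l, ap k * R k l * cm l))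
      - ((∑ k, ∑ l, am k * R k l * cp l) - (∑ k, ∑ l, am k * R k l * cm l)) := by
    rw [← Finset.sum_sub_distrib, ← Finset.sum_sub_distrib, ← Finset.sum_sub_distrib]
    refine Finset.sum_congr rfl fun k _ => ?_
    rw [← Finset.sum_sub_distrib, ← Finset.sum_sub_distrib, ← Finset.sum_sub_distrib]
    refine Finset.sum_congr rfl fun l _ => ?_
    have h1 : a k = ap k - am k := by rw [hap, ham]; rcases le_total (a k) 0 with h|h <;> simp [max_eq_left, max_eq_right, h] <;> ring
    have h2 : c l = cp l - cm l := by rw [hcp, hcm]; rcases le_total (c l) 0 with h|h <;> simp [max_eq_left, max_eq_right, h] <;> ring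
    calc a k * R k l * c l = (ap k - am k) * R k l * (cp l - cm l) := by rw [← h1, ← h2]
      _ = _ := by ring
  have bd : ∀ (x : Fin N → ℝ) (y : Fin N → ℝ), (∀ k, 0 ≤ x k ∧ x k ≤ s) → (∀ l, 0 ≤ y l ∧ y l ≤ t) →
      |∑ k, ∑ l, x k * R k l * y l| ≤ Rb * s * t := fun x y hx hy =>
    nonneg_bil R Rb s t hs ht hR x y hx hy
  have hapb : ∀ k, 0 ≤ ap k ∧ ap k ≤ s := fun k => ⟨le_max_right _ _, max_le (le_trans (le_abs_self _) (ha k)) hs⟩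
  have hamb : ∀ k, 0 ≤ am k ∧ am k ≤ s := fun k => ⟨le_max_right _ _, max_le (le_trans (neg_le_abs _) (ha k)) hs⟩
  have hcpb : ∀ l, 0 ≤ cp l ∧ cp l ≤ t := fun l => ⟨le_max_right _ _, max_le (le_trans (le_abs_self _) (hc l)) ht⟩
  have hcmb : ∀ l, 0 ≤ cm l ∧ cm l ≤ t := fun l => ⟨le_max_right _ _, max_le (le_trans (neg_le_abs _) (hc l)) ht⟩
  have b1 := bd ap cp hapb hcpb
  have b2 := bd ap cm hapb hcmb
  have b3 := bd am cp hamb hcpb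
  have b4 := bd am cm hamb hcmb
  rw [hsplit]
  calc |_| ≤ |(∑ k, ∑ l, ap k * R k l * cp l) - (∑ k, ∑ l, ap k * R k l * cm l)| +
      |(∑ k, ∑ l, am k * R k l * cp l) - (∑ k, ∑ l, am k * R k l * cm l)| := abs_sub _ _
    _ ≤ (|∑ k, ∑ l, ap k * R k l * cp l| + |∑ k, ∑ l, ap k * R k l * cm l|) +
        (|∑ k, ∑ l, am k * R k l * cp l| + |∑ k, ∑ l, am k * R k l * cm l|) := by
        gcongr <;> exact abs_sub _ _
    _ ≤ 4 * Rb * s * t := by linarith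

lemma complex_bil (C : Matrix (Fin N) (Fin N) ℂ) (Cb s t : ℝ)
    (hs : 0 ≤ s) (ht : 0 ≤ t)
    (hC : ∀ S T : Finset (Fin N), ‖∑ k ∈ S, ∑ l ∈ T, C k l‖ ≤ Cb)
    (x y : Fin N → ℂ) (hx : ∀ k, ‖x k‖ ≤ s) (hy : ∀ l, ‖y l‖ ≤ t) :
    ‖∑ k, ∑ l, x k * C k l * y l‖ ≤ 16 * Cb * s * t := by
  classical
  set ζ : ℂ := ∑ k, ∑ l, x k * C k l * y l with hζ
  by_cases h0 : ζ = 0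
  · rw [h0]
    simp only [norm_zero]
    have hCb : 0 ≤ Cb := le_trans (norm_nonneg _) (hC ∅ ∅)
    positivity
  set φ : ℂ := starRingEnd ℂ ζ / (‖ζ‖ : ℂ) with hφ
  have hφabs : ‖φ‖ = 1 := by
    rw [hφ, norm_div, Complex.norm_conj, Complex.norm_real, Real.norm_of_nonneg (norm_nonneg _)]
    exact div_self (by  simpa using h0)
  have hφζ : (φ * ζ).re = ‖ζ‖ ∧ (φ * ζ).im = 0 := by
    have : φ * ζ = (‖ζ‖ : ℂ) := by
      rw [hφ, div_mul_eq_mul_div, mul_comm, Complex.mul_conj]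
      rw [div_eq_iff (by simpa using h0 : (‖ζ‖ : ℂ) ≠ 0)]
      norm_cast
      rw [← Complex.sq_norm]
      ring
    rw [this]
    simp
  set x' : Fin N → ℂ := fun k => φ * x k with hx'
  have hx'b : ∀ k, ‖x' k‖ ≤ s := fun k => by
    rw [hx', norm_mul, hφabs, one_mul]; exact hx k
  have hre : ‖ζ‖ = ∑ k, ∑ l, (x' k * C k l * y l).re := by
    have h1 : φ * ζ = ∑ k, ∑ l, x' k * C k l * y l := by
      rw [hζ, Finset.mul_sum]
      refine Finset.sum_congr rfl fun k _ => ?_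
      rw [Finset.mul_sum]
      refine Finset.sum_congr rfl fun l _ => by rw [hx']; ring
    rw [← hφζ.1, h1, Complex.re_sum]
    exact Finset.sum_congr rfl fun k _ => Complex.re_sum _ _
  set a : Fin N → ℝ := fun k => (x' k).re
  set b : Fin N → ℝ := fun k => (x' k).im
  set c : Fin N → ℝ := fun l => (y l).re
  set d : Fin N → ℝ := fun l => (y l).im
  set R : Matrix (Fin N) (Fin N) ℝ := fun k l => (C k l).re with hRdef
  set S' : Matrix (Fin N) (Fin N) ℝ := fun k l => (C k l).im with hSdef
  have hterm : ∀ k l, (x' k * C k l * y l).re =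
      a k * R k l * c l - a k * S' k l * d l - b k * R k l * d l - b k * S' k l * c l := by
    intro k l
    simp [Complex.mul_re, Complex.mul_im]
    ring
  have hRrect : ∀ S T : Finset (Fin N), |∑ k ∈ S, ∑ l ∈ T, R k l| ≤ Cb := by
    intro S T
    have : ∑ k ∈ S, ∑ l ∈ T, R k l = (∑ k ∈ S, ∑ l ∈ T, C k l).re := by
      rw [Complex.re_sum]
      exact Finset.sum_congr rfl fun k _ => (Complex.re_sum _ _).symm
    rw [this]
    exact le_trans (Complex.abs_re_le_norm _) (hC S T)
  have hSrect : ∀ S T : Finset (Fin N), |∑ k ∈ S, ∑ l ∈ T, S' k l| ≤ Cb := by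
    intro S T
    have : ∑ k ∈ S, ∑ l ∈ T, S' k l = (∑ k ∈ S, ∑ l ∈ T, C k l).im := by
      rw [Complex.im_sum]
      exact Finset.sum_congr rfl fun k _ => (Complex.im_sum _ _).symm
    rw [this]
    exact le_trans (Complex.abs_im_le_norm _) (hC S T)
  have hab : ∀ k, |a k| ≤ s := fun k => le_trans (Complex.abs_re_le_norm _) (hx'b k)
  have hbb : ∀ k, |b k| ≤ s := fun k => le_trans (Complex.abs_im_le_norm _) (hx'b k)
  have hcb : ∀ l, |c l| ≤ t := fun l => le_trans (Complex.abs_re_le_norm _) (hy l)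
  have hdb : ∀ l, |d l| ≤ t := fun l => le_trans (Complex.abs_im_le_norm _) (hy l)
  have hsplit : ‖ζ‖ = (∑ k, ∑ l, a k * R k l * c l) - (∑ k, ∑ l, a k * S' k l * d l)
      - (∑ k, ∑ l, b k * R k l * d l) - (∑ k, ∑ l, b k * S' k l * c l) := by
    rw [hre]
    rw [← Finset.sum_sub_distrib, ← Finset.sum_sub_distrib, ← Finset.sum_sub_distrib]
    refine Finset.sum_congr rfl fun k _ => ?_
    rw [← Finset.sum_sub_distrib, ← Finset.sum_sub_distrib, ← Finset.sum_sub_distrib]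
    exact Finset.sum_congr rfl fun l _ => hterm k l
  have b1 := real_bil R Cb s t hs ht hRrect a c hab hcb
  have b2 := real_bil S' Cb s t hs ht hSrect a d hab hdb
  have b3 := real_bil R Cb s t hs ht hRrect b d hbb hdb
  have b4 := real_bil S' Cb s t hs ht hSrect b c hbb hcb
  have : ‖ζ‖ ≤ 16 * Cb * s * t := by
    rw [hsplit]
    have e1 := abs_le.1 b1
    have e2 := abs_le.1 b2
    have e3 := abs_le.1 b3
    have e4 := abs_le.1 b4
    linarith [e1.1, e1.2, e2.1, e2.2, e3.1, e3.2, e4.1, e4.2]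
  exact this

lemma qf_neg (M : Matrix (Fin N) (Fin N) ℂ) (v : Fin N → ℂ) : qf (-M) v = - qf M v := by
  simp [qf, Matrix.neg_mulVec, dotProduct_neg]

lemma weyl {X Y : Matrix (Fin N) (Fin N) ℂ} (hX : X.IsHermitian) (hY : Y.IsHermitian)
    (p : Fin N) {lam : ℝ} (hlam : ∀ v, |qf (X - Y) v| ≤ lam * nsq v) :
    |ev hX p - ev hY p| ≤ lam := by
  have d1 : ev hX p ≤ ev hY p + lam := by
    refine ev_le_of_subspace hX (coSpace hY (Finset.Iio p)) ?_ ?_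
    · have := finrank_coSpace_ge hY (Finset.Iio p)
      rwa [Fin.card_Iio] at this
    · intro v hv
      have h1 := qf_le_on_bot hY hv
      have h2 := (abs_le.1 (hlam v)).2
      have := qf_sub_add X Y v
      nlinarith [nsq_nonneg v]
  have d2 : ev hY p ≤ ev hX p + lam := by
    refine ev_le_of_subspace hY (coSpace hX (Finset.Iio p)) ?_ ?_
    · have := finrank_coSpace_ge hX (Finset.Iio p)
      rwa [Fin.card_Iio] at this
    · intro v hv
      have h1 := qf_le_on_bot hX hv
      have h2 := (abs_le.1 (hlam v)).1
      have := qf_sub_add Y X v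
      have hneg : qf (Y - X) v = - qf (X - Y) v := by
        rw [show Y - X = -(X - Y) from (neg_sub X Y).symm, qf_neg]
      nlinarith [nsq_nonneg v]
  rw [abs_sub_le_iff]
  constructor <;> linarith

lemma ev_diff_sq {X Y : Matrix (Fin N) (Fin N) ℂ} (hX : X.IsHermitian) (hY : Y.IsHermitian)
    (p : Fin N) (Cb : ℝ)
    (hent : ∀ k l, ‖(X - Y) k l‖ ≤ 2)
    (hrect : ∀ S T : Finset (Fin N), ‖∑ k ∈ S, ∑ l ∈ T, (X - Y) k l‖ ≤ Cb) :
    (ev hX p - ev hY p)^2 ≤ 32 * Cb := by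
  classical
  haveI : Nonempty (Fin N) := ⟨p⟩
  set C : Matrix (Fin N) (Fin N) ℂ := X - Y with hCdef
  have hC : C.IsHermitian := hX.sub hY
  set lam : ℝ := Finset.univ.sup' Finset.univ_nonempty (fun j => |ev hC j|) with hlam
  have hlam_ge : ∀ j, |ev hC j| ≤ lam := by
    intro j
    rw [hlam]
    exact Finset.le_sup' (fun j => |ev hC j|) (Finset.mem_univ j)
  have hlam0 : 0 ≤ lam := le_trans (abs_nonneg _) (hlam_ge (Classical.arbitrary _))
  obtain ⟨j₀, _, hj₀⟩ := Finset.exists_mem_eq_sup' Finset.univ_nonempty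
    (fun j => |ev hC j|)
  -- the eigenvector
  set v : Fin N → ℂ := evec hC j₀ with hv
  have hv0 : v ≠ 0 := by
    intro h
    have h1 := coef_evec hC j₀ j₀
    rw [if_pos rfl] at h1
    rw [← hv, h] at h1
    simp [coef] at h1
  set θ : ℝ := ev hC j₀ with hθ
  have hCv : C *ᵥ v = (θ : ℂ) • v := mulVec_evec hC j₀
  obtain ⟨k₀, _, hk₀⟩ := Finset.exists_max_image Finset.univ
    (fun k => ‖v k‖) ⟨Classical.arbitrary _, Finset.mem_univ _⟩
  have hvk₀ : 0 < ‖v k₀‖ := by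
    obtain ⟨k, hk⟩ : ∃ k, v k ≠ 0 := by
      by_contra h; push_neg at h; exact hv0 (funext h)
    exact lt_of_lt_of_le (by simpa using hk) (hk₀ k (Finset.mem_univ k))
  set z : Fin N → ℂ := C *ᵥ v with hz
  set ω : Fin N → ℂ := fun l => if z l = 0 then 0 else starRingEnd ℂ (z l) / (‖z l‖ : ℂ) with hω
  have hωb : ∀ l, ‖ω l‖ ≤ 1 := by
    intro l
    rw [hω]
    by_cases h : z l = 0
    · simp [h]
    · simp only [h, if_false]
      rw [norm_div, Complex.norm_conj, Complex.norm_real, Real.norm_of_nonneg (norm_nonneg _)]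
      rw [div_self (by simpa using h)]
  have hωz : ∀ l, ω l * z l = (‖z l‖ : ℂ) := by
    intro l
    rw [hω]
    by_cases h : z l = 0
    · simp [h]
    · simp only [h, if_false]
      rw [div_mul_eq_mul_div, mul_comm, Complex.mul_conj]
      rw [div_eq_iff (by simpa using h : (‖z l‖ : ℂ) ≠ 0)]
      norm_cast
      rw [← Complex.sq_norm]
      ring
  have hsum_z : ∑ l, ‖z l‖ = ‖∑ l, ∑ k, ω l * C l k * v k‖ := by
    have h1 : ∑ l, ∑ k, ω l * C l k * v k = ∑ l, ω l * z l := by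
      refine Finset.sum_congr rfl fun l _ => ?_
      rw [hz, Matrix.mulVec, dotProduct, Finset.mul_sum]
      exact Finset.sum_congr rfl fun k _ => by ring
    rw [h1]
    have h2 : ∑ l, ω l * z l = ((∑ l, ‖z l‖ : ℝ) : ℂ) := by
      rw [Complex.ofReal_sum]
      exact Finset.sum_congr rfl fun l _ => by rw [hωz l]
    rw [h2, Complex.norm_real, Real.norm_of_nonneg (Finset.sum_nonneg fun l _ => norm_nonneg _)]
  have hbil := complex_bil C Cb 1 (‖v k₀‖) zero_le_one (norm_nonneg _)
    hrect ω v (fun k => hωb k) (fun k => hk₀ k (Finset.mem_univ k))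
  -- pointwise chain
  have hchain : θ^2 * ‖v k₀‖ ≤ 2 * ∑ l, ‖z l‖ := by
    have h1 : (C *ᵥ z) k₀ = (θ:ℂ)^2 * v k₀ := by
      rw [hCv, Matrix.mulVec_smul, ← hz, hCv]
      simp only [Pi.smul_apply, smul_eq_mul]
      ring
    have h2 : ‖(C *ᵥ z) k₀‖ ≤ 2 * ∑ l, ‖z l‖ := by
      rw [Matrix.mulVec, dotProduct]
      refine le_trans (norm_sum_le _ _) ?_
      rw [Finset.mul_sum]
      refine Finset.sum_le_sum fun l _ => ?_
      rw [norm_mul]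
      exact mul_le_mul_of_nonneg_right (hent k₀ l) (norm_nonneg _)
    rw [h1] at h2
    rw [norm_mul, norm_pow, Complex.norm_real, Real.norm_eq_abs] at h2
    calc θ^2 * ‖v k₀‖ ≤ |θ|^2 * ‖v k₀‖ := by
          rw [← sq_abs]
      _ ≤ 2 * ∑ l, ‖z l‖ := h2
  have hfinal : θ^2 ≤ 32 * Cb := by
    have := le_trans hchain (by linarith [mul_le_mul_of_nonneg_left hbil (zero_le_two (α := ℝ))] :
      2 * ∑ l, ‖z l‖ ≤ 2 * (16 * Cb * 1 * ‖v k₀‖))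
    have h32 : θ^2 * ‖v k₀‖ ≤ 32 * Cb * ‖v k₀‖ := by
      calc θ^2 * ‖v k₀‖ ≤ 2 * (16 * Cb * 1 * ‖v k₀‖) := this
        _ = 32 * Cb * ‖v k₀‖ := by ring
    exact le_of_mul_le_mul_right h32 hvk₀
  -- from Weyl
  have hwe : |ev hX p - ev hY p| ≤ lam := by
    refine weyl hX hY p fun w => ?_
    exact abs_qf_le hC hlam_ge w
  have hlam_sq : lam^2 ≤ 32 * Cb := by
    have hlam_eq : lam = |θ| := hlam.trans hj₀
    rw [hlam_eq, sq_abs]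
    exact hfinal
  calc (ev hX p - ev hY p)^2 = |ev hX p - ev hY p|^2 := (sq_abs _).symm
    _ ≤ lam^2 := by
        have := hwe
        nlinarith [abs_nonneg (ev hX p - ev hY p)]
    _ ≤ 32 * Cb := hlam_sq

-- ===== blowup =====


/-- generic rank bound for comap -/
lemma finrank_comap_ge {V W : Type*} [AddCommGroup V] [Module ℂ V] [AddCommGroup W]
    [Module ℂ W] [FiniteDimensional ℂ V] [FiniteDimensional ℂ W]
    (f : V →ₗ[ℂ] W) (U : Submodule ℂ W) :
    Module.finrank ℂ V - (Module.finrank ℂ W - Module.finrank ℂ U) ≤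
      Module.finrank ℂ (Submodule.comap f U) := by
  classical
  have h1 : Submodule.comap f U = LinearMap.ker (U.mkQ.comp f) := by
    rw [LinearMap.ker_comp, Submodule.ker_mkQ]
  have h2 := LinearMap.finrank_range_add_finrank_ker (U.mkQ.comp f)
  have h3 : Module.finrank ℂ (LinearMap.range (U.mkQ.comp f)) ≤
      Module.finrank ℂ (W ⧸ U) := Submodule.finrank_le _
  have h4 := Submodule.finrank_quotient_add_finrank U
  have h5 : Module.finrank ℂ U ≤ Module.finrank ℂ W := Submodule.finrank_le _
  rw [h1]
  omega

section blowupstuff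
variable {n t : ℕ}

/-- block-replication map -/
noncomputable def bupL (n t : ℕ) : (Fin n → ℂ) →ₗ[ℂ] (Fin (n * t) → ℂ) where
  toFun w := fun i => w (finProdFinEquiv.symm i).1
  map_add' x y := rfl
  map_smul' a x := rfl

/-- block-sum map -/
noncomputable def bsumL (n t : ℕ) : (Fin (n * t) → ℂ) →ₗ[ℂ] (Fin n → ℂ) where
  toFun v := fun a => ∑ b : Fin t, v (finProdFinEquiv (a, b))
  map_add' x y := by
    funext a
    simp [Finset.sum_add_distrib]
  map_smul' a x := by
    funext b
    simp [Finset.mul_sum]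

lemma sum_blowup_index {α : Type*} [AddCommMonoid α] (f : Fin (n * t) → α) :
    ∑ i, f i = ∑ a : Fin n, ∑ b : Fin t, f (finProdFinEquiv (a, b)) := by
  rw [← Equiv.sum_comp finProdFinEquiv f, Fintype.sum_prod_type]

lemma bsum_bup (w : Fin n → ℂ) : bsumL n t (bupL n t w) = (t : ℂ) • w := by
  funext a
  simp only [bsumL, bupL, LinearMap.coe_mk, AddHom.coe_mk, Equiv.symm_apply_apply,
    Pi.smul_apply, smul_eq_mul]
  simp [Finset.sum_const]

lemma blowup_mulVec (A : Matrix (Fin n) (Fin n) ℂ) (v : Fin (n * t) → ℂ) :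
    blowup A t *ᵥ v = bupL n t (A *ᵥ bsumL n t v) := by
  funext i
  simp only [Matrix.mulVec, dotProduct, blowup, Matrix.of_apply, bupL, bsumL,
    LinearMap.coe_mk, AddHom.coe_mk]
  rw [sum_blowup_index (fun j => A (finProdFinEquiv.symm i).1 (finProdFinEquiv.symm j).1 * v j)]
  refine Finset.sum_congr rfl fun a _ => ?_
  rw [Finset.mul_sum]
  exact Finset.sum_congr rfl fun b _ => by rw [Equiv.symm_apply_apply]

lemma star_dot_bup (v : Fin (n * t) → ℂ) (x : Fin n → ℂ) :
    star v ⬝ᵥ bupL n t x = star (bsumL n t v) ⬝ᵥ x := by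
  simp only [dotProduct, bupL, bsumL, LinearMap.coe_mk, AddHom.coe_mk, Pi.star_apply]
  rw [sum_blowup_index (fun i => star (v i) * x (finProdFinEquiv.symm i).1)]
  refine Finset.sum_congr rfl fun a _ => ?_
  rw [star_sum, Finset.sum_mul]
  refine Finset.sum_congr rfl fun b _ => ?_
  rw [Equiv.symm_apply_apply]

lemma nsq_bup (w : Fin n → ℂ) : nsq (bupL n t w) = t * nsq w := by
  rw [nsq, sum_blowup_index (fun i => Complex.normSq (bupL n t w i))]
  rw [nsq, Finset.mul_sum]
  refine Finset.sum_congr rfl fun a _ => ?_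
  simp only [bupL, LinearMap.coe_mk, AddHom.coe_mk, Equiv.symm_apply_apply]
  simp [Finset.sum_const]

lemma nsq_bsum_le (v : Fin (n * t) → ℂ) : nsq (bsumL n t v) ≤ t * nsq v := by
  rw [nsq, nsq, sum_blowup_index (fun i => Complex.normSq (v i)), Finset.mul_sum]
  refine Finset.sum_le_sum fun a _ => ?_
  simp only [bsumL, LinearMap.coe_mk, AddHom.coe_mk]
  have h1 : Complex.normSq (∑ b : Fin t, v (finProdFinEquiv (a, b))) ≤
      (∑ b : Fin t, ‖v (finProdFinEquiv (a, b))‖)^2 := by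
    rw [← Complex.sq_norm]
    have := norm_sum_le Finset.univ (fun b => v (finProdFinEquiv (a, b)))
    have h0 : (0:ℝ) ≤ ‖∑ b : Fin t, v (finProdFinEquiv (a, b))‖ := norm_nonneg _
    nlinarith
  have h2 : (∑ b : Fin t, ‖v (finProdFinEquiv (a, b))‖)^2 ≤
      (t : ℝ) * ∑ b : Fin t, Complex.normSq (v (finProdFinEquiv (a, b))) := by
    have := Finset.sum_mul_sq_le_sq_mul_sq Finset.univ (fun _ : Fin t => (1:ℝ))
      (fun b => ‖v (finProdFinEquiv (a, b))‖)
    simp only [one_pow, one_mul, mul_one, Finset.sum_const, Finset.card_univ, Fintype.card_fin,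
      nsmul_eq_mul] at this
    calc (∑ b : Fin t, ‖v (finProdFinEquiv (a, b))‖)^2 ≤
        (t : ℝ) * ∑ b : Fin t, ‖v (finProdFinEquiv (a, b))‖^2 := this
      _ = (t : ℝ) * ∑ b : Fin t, Complex.normSq (v (finProdFinEquiv (a, b))) := by
          congr 1
          exact Finset.sum_congr rfl fun b _ => Complex.sq_norm _
  rw [Finset.mul_sum] at h2 ⊢
  exact le_trans h1 h2

lemma qf_blowup (A : Matrix (Fin n) (Fin n) ℂ) (v : Fin (n * t) → ℂ) :
    qf (blowup A t) v = qf A (bsumL n t v) := by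
  rw [qf, blowup_mulVec, star_dot_bup, qf]

lemma blowup_isHermitian {A : Matrix (Fin n) (Fin n) ℂ} (hA : A.IsHermitian) :
    (blowup A t).IsHermitian := by
  ext i j
  simp only [Matrix.conjTranspose_apply, blowup, Matrix.of_apply]
  rw [← Matrix.conjTranspose_apply, hA.eq]

lemma qf_real_smul (M : Matrix (Fin n) (Fin n) ℂ) (r : ℝ) (w : Fin n → ℂ) :
    qf M ((r : ℂ) • w) = r^2 * qf M w := by
  rw [qf, qf, Matrix.mulVec_smul]
  have hst : star ((r:ℂ) • w) = (r:ℂ) • star w := by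
    funext k
    simp only [Pi.star_apply, Pi.smul_apply, smul_eq_mul, Complex.star_def, _root_.map_mul,
      Complex.conj_ofReal]
  rw [hst, smul_dotProduct, dotProduct_smul]
  simp only [smul_eq_mul, ← mul_assoc]
  rw [show ((r:ℂ) * (r:ℂ)) = ((r^2 : ℝ) : ℂ) by push_cast; ring]
  simp [Complex.mul_re, Complex.ofReal_re, Complex.ofReal_im, ← Complex.ofReal_pow]

lemma nsq_real_smul (r : ℝ) (w : Fin n → ℂ) : nsq ((r : ℂ) • w) = r^2 * nsq w := by
  rw [nsq, nsq, Finset.mul_sum]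
  refine Finset.sum_congr rfl fun k _ => ?_
  simp only [Pi.smul_apply, smul_eq_mul, Complex.normSq_mul, Complex.normSq_ofReal]
  ring

lemma bupL_injective (ht : 0 < t) : Function.Injective (bupL n t) := by
  intro x y h
  have h2 := congrArg (bsumL n t) h
  rw [bsum_bup, bsum_bup] at h2
  have ht' : (t : ℂ) ≠ 0 := by
    have : t ≠ 0 := by omega
    exact_mod_cast this
  exact smul_right_injective _ ht' h2

lemma ev_blowup {n t : ℕ} (ht : 0 < t) {A : Matrix (Fin n) (Fin n) ℂ} (hA : A.IsHermitian)
    (p : Fin n) (hp0 : 0 ≤ ev hA p) (p' : Fin (n * t)) (hpp : (p' : ℕ) = (p : ℕ)) :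
    ev (blowup_isHermitian (t := t) hA) p' = (t : ℝ) * ev hA p := by
  have h4 : Module.finrank ℂ (Fin n → ℂ) = n := by
    rw [Module.finrank_fintype_fun_eq_card]; simp
  have hup : ev (blowup_isHermitian (t := t) hA) p' ≤ (t : ℝ) * ev hA p := by
    refine ev_le_of_subspace _ (Submodule.comap (bsumL n t) (coSpace hA (Finset.Iio p))) ?_ ?_
    · have h1 := finrank_comap_ge (bsumL n t) (coSpace hA (Finset.Iio p))
      have h2 := finrank_coSpace_ge hA (Finset.Iio p)
      rw [Fin.card_Iio] at h2
      have h3 : Module.finrank ℂ (Fin (n * t) → ℂ) = n * t := by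
        rw [Module.finrank_fintype_fun_eq_card]; simp
      have h5 : Module.finrank ℂ (coSpace hA (Finset.Iio p)) ≤ n := by
        have := Submodule.finrank_le (coSpace hA (Finset.Iio p))
        omega
      have hpn := p.2
      omega
    · intro v hv
      rw [Submodule.mem_comap] at hv
      have h1 := qf_le_on_bot hA hv
      rw [qf_blowup]
      have h2 := nsq_bsum_le (t := t) v
      have h3 := nsq_nonneg (bsumL n t v)
      nlinarith
  have hdown : (t : ℝ) * ev hA p ≤ ev (blowup_isHermitian (t := t) hA) p' := by
    refine le_ev_of_subspace _ (Submodule.map (bupL n t) (coSpace hA (Finset.Ioi p))) ?_ ?_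
    · have h1 : Module.finrank ℂ (Submodule.map (bupL n t) (coSpace hA (Finset.Ioi p)))
          = Module.finrank ℂ (coSpace hA (Finset.Ioi p)) :=
        (Submodule.equivMapOfInjective _ (bupL_injective ht) _).finrank_eq.symm
      have h2 := finrank_coSpace_ge hA (Finset.Ioi p)
      rw [Fin.card_Ioi] at h2
      have hpn := p.2
      omega
    · intro v hv
      obtain ⟨w, hw, rfl⟩ := Submodule.mem_map.1 hv
      rw [qf_blowup, bsum_bup, nsq_bup]
      rw [show ((t : ℂ)) = (((t:ℝ)) : ℂ) by push_cast; ring]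
      rw [qf_real_smul]
      have h1 := qf_ge_on_top hA hw
      have h2 := nsq_nonneg w
      have ht2 : (0:ℝ) ≤ (t:ℝ) := Nat.cast_nonneg t
      nlinarith
  linarith

lemma nsq_comp_equiv {N₁ N₂ : ℕ} (e : Fin N₁ ≃ Fin N₂) (v : Fin N₂ → ℂ) :
    nsq (v ∘ e) = nsq v := by
  rw [nsq, nsq]
  exact Equiv.sum_comp e (fun k => Complex.normSq (v k))

lemma qf_comp_equiv {N₁ N₂ : ℕ} (e : Fin N₁ ≃ Fin N₂) (M : Matrix (Fin N₂) (Fin N₂) ℂ)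
    (v : Fin N₂ → ℂ) : qf (M.submatrix e e) (v ∘ e) = qf M v := by
  have hmv : (M.submatrix e e) *ᵥ (v ∘ e) = (M *ᵥ v) ∘ e := by
    funext i
    simp only [Matrix.mulVec, dotProduct, Matrix.submatrix_apply, Function.comp_apply]
    exact Equiv.sum_comp e (fun j => M (e i) j * v j)
  rw [qf, hmv, qf]
  congr 1
  exact Equiv.sum_comp e (fun k => star (v k) * (M *ᵥ v) k)

lemma ev_submatrix {N₁ N₂ : ℕ} (e : Fin N₁ ≃ Fin N₂) {M : Matrix (Fin N₂) (Fin N₂) ℂ}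
    (hM : M.IsHermitian) (p₁ : Fin N₁) (p₂ : Fin N₂) (hpp : (p₁ : ℕ) = (p₂ : ℕ)) :
    ev (hM.submatrix ⇑e) p₁ = ev hM p₂ := by
  have hN : N₁ = N₂ := by simpa using Fintype.card_congr e
  have hdim : ∀ (K : ℕ), Module.finrank ℂ (Fin K → ℂ) = K := fun K => by
    rw [Module.finrank_fintype_fun_eq_card]; simp
  set E : (Fin N₂ → ℂ) ≃ₗ[ℂ] (Fin N₁ → ℂ) := LinearEquiv.funCongrLeft ℂ ℂ e with hE
  have hEapp : ∀ v : Fin N₂ → ℂ, E v = v ∘ e := fun v => rfl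
  have h1 : ev (hM.submatrix ⇑e) p₁ ≤ ev hM p₂ := by
    refine ev_le_of_subspace _ (Submodule.map (E : (Fin N₂ → ℂ) →ₗ[ℂ] (Fin N₁ → ℂ))
      (coSpace hM (Finset.Iio p₂))) ?_ ?_
    · have hr : Module.finrank ℂ (Submodule.map (E : (Fin N₂ → ℂ) →ₗ[ℂ] (Fin N₁ → ℂ))
          (coSpace hM (Finset.Iio p₂))) = Module.finrank ℂ (coSpace hM (Finset.Iio p₂)) :=
        LinearEquiv.finrank_map_eq E _
      have h2 := finrank_coSpace_ge hM (Finset.Iio p₂)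
      rw [Fin.card_Iio] at h2
      omega
    · intro v hv
      obtain ⟨w, hw, rfl⟩ := Submodule.mem_map.1 hv
      have h1 := qf_le_on_bot hM hw
      rw [show (E : (Fin N₂ → ℂ) →ₗ[ℂ] (Fin N₁ → ℂ)) w = w ∘ e from rfl]
      rw [qf_comp_equiv, nsq_comp_equiv]
      exact h1
  have h2 : ev hM p₂ ≤ ev (hM.submatrix ⇑e) p₁ := by
    refine le_ev_of_subspace _ (Submodule.map (E : (Fin N₂ → ℂ) →ₗ[ℂ] (Fin N₁ → ℂ))
      (coSpace hM (Finset.Ioi p₂))) ?_ ?_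
    · have hr : Module.finrank ℂ (Submodule.map (E : (Fin N₂ → ℂ) →ₗ[ℂ] (Fin N₁ → ℂ))
          (coSpace hM (Finset.Ioi p₂))) = Module.finrank ℂ (coSpace hM (Finset.Ioi p₂)) :=
        LinearEquiv.finrank_map_eq E _
      have h3 := finrank_coSpace_ge hM (Finset.Ioi p₂)
      rw [Fin.card_Ioi] at h3
      have := p₂.2
      omega
    · intro v hv
      obtain ⟨w, hw, rfl⟩ := Submodule.mem_map.1 hv
      have h1 := qf_ge_on_top hM hw
      rw [show (E : (Fin N₂ → ℂ) →ₗ[ℂ] (Fin N₁ → ℂ)) w = w ∘ e from rfl]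
      rw [qf_comp_equiv, nsq_comp_equiv]
      exact h1
  linarith


end blowupstuff

lemma le_supAbs {M N : ℕ} (A : Matrix (Fin M) (Fin N) ℂ) (i : Fin M) (j : Fin N) :
    ‖A i j‖ ≤ supAbs A := by
  have h1 : ‖A i j‖ ≤ ⨆ j', ‖A i j'‖ :=
    le_ciSup (f := fun j' => ‖A i j'‖)
      (Set.Finite.bddAbove (Set.finite_range _)) j
  have h2 : (⨆ j', ‖A i j'‖) ≤ supAbs A :=
    le_ciSup (f := fun i' => ⨆ j', ‖A i' j'‖)
      (Set.Finite.bddAbove (Set.finite_range _)) i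
  exact h1.trans h2

lemma cutNorm_nonneg {M N : ℕ} (A : Matrix (Fin M) (Fin N) ℂ) : 0 ≤ cutNorm A := by
  have h := Finset.le_sup' (fun p : Finset (Fin M) × Finset (Fin N) =>
    ‖∑ i ∈ p.1, ∑ j ∈ p.2, A i j‖ / (M * N))
    (Finset.mem_univ ((∅ : Finset (Fin M)), (∅ : Finset (Fin N))))
  simp only [Finset.sum_empty, norm_zero, zero_div] at h
  exact le_trans (le_refl 0) h

lemma rect_le_cutNorm {N : ℕ} (A : Matrix (Fin N) (Fin N) ℂ) (hN : 0 < N)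
    (S T : Finset (Fin N)) :
    ‖∑ i ∈ S, ∑ j ∈ T, A i j‖ ≤ cutNorm A * (N * N) := by
  have h1 : ‖∑ i ∈ S, ∑ j ∈ T, A i j‖ / (N * N) ≤ cutNorm A :=
    Finset.le_sup' (fun p : Finset (Fin N) × Finset (Fin N) =>
      ‖∑ i ∈ p.1, ∑ j ∈ p.2, A i j‖ / (N * N)) (Finset.mem_univ (S, T))
  have hNN : (0:ℝ) < (N : ℝ) * N := by positivity
  calc ‖∑ i ∈ S, ∑ j ∈ T, A i j‖
      = ‖∑ i ∈ S, ∑ j ∈ T, A i j‖ / (N * N) * (N * N) := by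
        field_simp
    _ ≤ cutNorm A * (N * N) := by
        exact mul_le_mul_of_nonneg_right h1 (le_of_lt hNN)

lemma ev_congr {N : ℕ} {M M' : Matrix (Fin N) (Fin N) ℂ} (hMM : M = M')
    (hM : M.IsHermitian) (hM' : M'.IsHermitian) (p : Fin N) : ev hM p = ev hM' p := by
  subst hMM
  rfl

end EigCut

set_option maxHeartbeats 1600000 in
/-- Let `A`, `B` be Hermitian matrices of sizes `n`, `m` with `|A|_∞ ≤ 1`,
`|B|_∞ ≤ 1`, and let `1 ≤ i ≤ min(m,n)`.  If `μᵢ(A) ≥ 0` and `μᵢ(B) ≥ 0`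
(eigenvalues in decreasing order), then
`|μᵢ(A)/n − μᵢ(B)/m| ≤ 6 δ_□(A,B)^{1/2}`. -/
theorem eigenvalue_cutDist_bound {n m : ℕ} (A : Matrix (Fin n) (Fin n) ℂ)
    (B : Matrix (Fin m) (Fin m) ℂ) (hA : A.IsHermitian) (hB : B.IsHermitian)
    (hA1 : supAbs A ≤ 1) (hB1 : supAbs B ≤ 1)
    (i : ℕ) (hi : 1 ≤ i) (hin : i ≤ n) (him : i ≤ m)
    (hμA : 0 ≤ sortDesc hA.eigenvalues ⟨i - 1, by omega⟩)
    (hμB : 0 ≤ sortDesc hB.eigenvalues ⟨i - 1, by omega⟩) :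
    |sortDesc hA.eigenvalues ⟨i - 1, by omega⟩ / n -
      sortDesc hB.eigenvalues ⟨i - 1, by omega⟩ / m| ≤
      6 * Real.sqrt (cutDist A B) := by
  classical
  have hn : 0 < n := by omega
  have hm : 0 < m := by omega
  set D : ℝ := sortDesc hA.eigenvalues ⟨i - 1, by omega⟩ / n -
      sortDesc hB.eigenvalues ⟨i - 1, by omega⟩ / m with hDdef
  have key : ∀ K : ℕ, ∀ pf : n * ((K + 1) * m) = m * ((K + 1) * n), |D|^2 / 36 ≤
      hatDelta (blowup A ((K + 1) * m))
        ((blowup B ((K + 1) * n)).submatrix (finCongr pf) (finCongr pf)) := by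
    intro K pf
    refine le_ciInf fun σ => ?_
    have htA : 0 < (K + 1) * m := by positivity
    have htB : 0 < (K + 1) * n := by positivity
    have hN₁ : 0 < n * ((K + 1) * m) := Nat.mul_pos hn htA
    have hiN : i - 1 < n * ((K + 1) * m) := by
      have h1 : i - 1 < n := by omega
      have h2 : n ≤ n * ((K + 1) * m) := Nat.le_mul_of_pos_right n htA
      omega
    have hiM : i - 1 < m * ((K + 1) * n) := by
      have h1 : i - 1 < m := by omega
      have h2 : m ≤ m * ((K + 1) * n) := Nat.le_mul_of_pos_right m htB
      omega
    set X := blowup A ((K + 1) * m) with hXdef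
    have hX : X.IsHermitian := EigCut.blowup_isHermitian hA
    set e : Fin (n * ((K + 1) * m)) ≃ Fin (m * ((K + 1) * n)) := σ.trans (finCongr pf) with hedef
    set Ymat := (blowup B ((K + 1) * n)).submatrix (finCongr pf) (finCongr pf) with hYmatdef
    have hBblow : (blowup B ((K + 1) * n)).IsHermitian := EigCut.blowup_isHermitian hB
    have hYσeq : Ymat.submatrix ⇑σ ⇑σ = (blowup B ((K + 1) * n)).submatrix ⇑e ⇑e := by
      rw [hYmatdef, Matrix.submatrix_submatrix]
      rfl
    have hYσ : (Ymat.submatrix ⇑σ ⇑σ).IsHermitian :=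
      (hBblow.submatrix _).submatrix _
    have hYe : ((blowup B ((K + 1) * n)).submatrix ⇑e ⇑e).IsHermitian :=
      hBblow.submatrix ⇑e
    set pN : Fin (n * ((K + 1) * m)) := ⟨i - 1, hiN⟩ with hpNdef
    set p : Fin n := (⟨i - 1, by omega⟩ : Fin n) with hpdef
    set q : Fin m := (⟨i - 1, by omega⟩ : Fin m) with hqdef
    set q' : Fin (m * ((K + 1) * n)) := ⟨i - 1, hiM⟩ with hq'def
    have e1 : EigCut.ev hX pN = (((K + 1) * m : ℕ) : ℝ) * EigCut.ev hA p :=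
      EigCut.ev_blowup htA hA p hμA pN rfl
    have e2 : EigCut.ev hYσ pN = (((K + 1) * n : ℕ) : ℝ) * EigCut.ev hB q := by
      have s1 : EigCut.ev hYσ pN = EigCut.ev hYe pN :=
        EigCut.ev_congr hYσeq hYσ hYe pN
      have s2 : EigCut.ev hYe pN = EigCut.ev hBblow q' :=
        EigCut.ev_submatrix e hBblow pN q' rfl
      have s3 : EigCut.ev hBblow q' = (((K + 1) * n : ℕ) : ℝ) * EigCut.ev hB q :=
        EigCut.ev_blowup htB hB q hμB q' rfl
      rw [s1, s2, s3]
    -- entry bounds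
    have hent : ∀ k l, ‖(X - Ymat.submatrix ⇑σ ⇑σ) k l‖ ≤ 2 := by
      intro k l
      have hXe : ‖X k l‖ ≤ 1 := le_trans (EigCut.le_supAbs A _ _) hA1
      have hYee : ‖(Ymat.submatrix ⇑σ ⇑σ) k l‖ ≤ 1 := by
        rw [hYσeq]
        exact le_trans (EigCut.le_supAbs B _ _) hB1
      calc ‖(X - Ymat.submatrix ⇑σ ⇑σ) k l‖
          = ‖X k l - (Ymat.submatrix ⇑σ ⇑σ) k l‖ := by rw [Matrix.sub_apply]
        _ ≤ ‖X k l‖ + ‖(Ymat.submatrix ⇑σ ⇑σ) k l‖ := norm_sub_le _ _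
        _ ≤ 1 + 1 := by
            exact add_le_add hXe hYee
        _ = 2 := by norm_num
    have hrect : ∀ S T : Finset (Fin (n * ((K + 1) * m))),
        ‖∑ k ∈ S, ∑ l ∈ T, (X - Ymat.submatrix ⇑σ ⇑σ) k l‖ ≤
          cutNorm (X - Ymat.submatrix ⇑σ ⇑σ) * ((n * ((K + 1) * m) : ℕ) * (n * ((K + 1) * m) : ℕ)) :=
      fun S T => EigCut.rect_le_cutNorm _ hN₁ S T
    have hdiff := EigCut.ev_diff_sq hX hYσ pN _ hent hrect
    -- translate eigenvalues
    have hevA : EigCut.ev hA p = sortDesc hA.eigenvalues ⟨i - 1, by omega⟩ := rfl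
    have hevB : EigCut.ev hB q = sortDesc hB.eigenvalues ⟨i - 1, by omega⟩ := rfl
    set NR : ℝ := ((n * ((K + 1) * m) : ℕ) : ℝ) with hNRdef
    have hNRpos : 0 < NR := by
      rw [hNRdef]
      exact_mod_cast hN₁
    have hcast1 : (((K + 1) * m : ℕ) : ℝ) * n = NR := by
      rw [hNRdef]
      push_cast
      ring
    have hcast2 : (((K + 1) * n : ℕ) : ℝ) * m = NR := by
      rw [hNRdef, pf]
      push_cast
      ring
    have hn' : (n : ℝ) ≠ 0 := by exact_mod_cast hn.ne'
    have hm' : (m : ℝ) ≠ 0 := by exact_mod_cast hm.ne'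
    have hc1 : (((K + 1) * m : ℕ) : ℝ) = NR / n := by
      rw [eq_div_iff hn']
      exact hcast1
    have hc2 : (((K + 1) * n : ℕ) : ℝ) = NR / m := by
      rw [eq_div_iff hm']
      exact hcast2
    have hsplit : EigCut.ev hX pN - EigCut.ev hYσ pN = NR * D := by
      rw [e1, e2, hc1, hc2, hDdef, ← hevA, ← hevB]
      field_simp
    have hD2 : D^2 * (NR * NR) ≤ 32 * cutNorm (X - Ymat.submatrix ⇑σ ⇑σ) * (NR * NR) := by
      have : (NR * D)^2 ≤ 32 * (cutNorm (X - Ymat.submatrix ⇑σ ⇑σ) * (NR * NR)) := by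
        rw [← hsplit]
        exact hdiff
      nlinarith
    have hD3 : D^2 ≤ 32 * cutNorm (X - Ymat.submatrix ⇑σ ⇑σ) :=
      le_of_mul_le_mul_right hD2 (by positivity)
    have hcn : 0 ≤ cutNorm (X - Ymat.submatrix ⇑σ ⇑σ) := EigCut.cutNorm_nonneg _
    rw [sq_abs, div_le_iff₀ (by norm_num : (0:ℝ) < 36)]
    nlinarith [hD3, hcn]
  have hD : |D|^2 / 36 ≤ cutDist A B := le_ciInf fun K => key K (by ring)
  have h36 : |D|^2 ≤ 36 * cutDist A B := by linarith
  calc |D| = Real.sqrt (|D|^2) := (Real.sqrt_sq (abs_nonneg _)).symm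
    _ ≤ Real.sqrt (36 * cutDist A B) := Real.sqrt_le_sqrt h36
    _ = 6 * Real.sqrt (cutDist A B) := by
        rw [show (36 : ℝ) * cutDist A B = 6^2 * cutDist A B by ring]
        rw [Real.sqrt_mul (by positivity : (0:ℝ) ≤ (6:ℝ)^2)]
        rw [Real.sqrt_sq (by norm_num : (0:ℝ) ≤ (6:ℝ))]
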